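/- In the fixed run setting, suppose i ≤ n, t ∉ σ(𝒟) ∪ 𝒱_q, and σ(T_i) ⊢dy t via a normal proof ending in a destructor rule. Then there is an ℓ < i such that σ(T_ℓ) ⊢dy t. -/

import Mathlib

open scoped Classical

/-! ## Terms -/

inductive Term : Type
  | name : ℕ → Term
  | var  : ℕ → Term
  | pair : Term → Term → Term
  | enc  : Term → Term → Term
deriving DecidableEq

namespace Term

def subterms : Term → Set Term
  | name n => {name n}
  | var x => {var x}
  | pair a b => insert (pair a b) (subterms a ∪ subterms b)
  | enc a b => insert (enc a b) (subterms a ∪ subterms b)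

def tvars : Term → Set ℕ
  | name _ => ∅
  | var x => {x}
  | pair a b => tvars a ∪ tvars b
  | enc a b => tvars a ∪ tvars b

/-- A term is ground if it contains no variables. -/
def ground (t : Term) : Prop := tvars t = ∅

end Term

def sSubterms (X : Set Term) : Set Term := ⋃ t ∈ X, t.subterms
def sVars (X : Set Term) : Set ℕ := ⋃ t ∈ X, t.tvars
def varTerms (V : Set ℕ) : Set Term := Term.var '' V
def pairSubterms (E : Set (Term × Term)) : Set Term :=
  ⋃ e ∈ E, (Term.subterms e.1 ∪ Term.subterms e.2)

/-! ## Substitutions -/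

abbrev Subst := ℕ → Term

namespace Subst

def app (σ : Subst) : Term → Term
  | Term.name n => Term.name n
  | Term.var x => σ x
  | Term.pair a b => Term.pair (app σ a) (app σ b)
  | Term.enc a b => Term.enc (app σ a) (app σ b)

def dom (σ : Subst) : Set ℕ := {x | σ x ≠ Term.var x}

/-- A (totally) ground substitution. -/
def isGround (σ : Subst) : Prop := ∀ x, (σ x).ground

end Subst

def pairImg (σ : Subst) (E : Set (Term × Term)) : Set (Term × Term) :=
  (fun e => (σ.app e.1, σ.app e.2)) '' E

/-! ## Dolev-Yao derivability.  `inv` gives the inverse of a key. -/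

inductive dy (inv : Term → Term) (X : Set Term) : Term → Prop
  | ax {t} : t ∈ X → dy inv X t
  | pair {t u} : dy inv X t → dy inv X u → dy inv X (Term.pair t u)
  | enc {t k} : dy inv X t → dy inv X k → dy inv X (Term.enc t k)
  | fst {t u} : dy inv X (Term.pair t u) → dy inv X t
  | snd {t u} : dy inv X (Term.pair t u) → dy inv X u
  | dec {t k} : dy inv X (Term.enc t k) → dy inv X (inv k) → dy inv X t

/-! ## Positions -/

def positions : Term → Set (List Bool)
  | Term.pair a b =>
      insert [] ((List.cons false) '' positions a ∪ (List.cons true) '' positions b)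
  | Term.enc a b =>
      insert [] ((List.cons false) '' positions a ∪ (List.cons true) '' positions b)
  | _ => {[]}

def subtermAt : Term → List Bool → Option Term
  | t, [] => some t
  | Term.pair a b, i :: p => subtermAt (if i then b else a) p
  | Term.enc a b, i :: p => subtermAt (if i then b else a) p
  | _, _ :: _ => none

/-- Positions of `t` at which the variable `x` occurs. -/
def posof (x : ℕ) (t : Term) : Set (List Bool) := {p | subtermAt t p = some (Term.var x)}

/-- Replace the subterms at every position in `P` by `r`. -/
noncomputable def replaceAt : Term → Set (List Bool) → Term → Term
  | Term.pair a b, P, r =>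
      if [] ∈ P then r
      else Term.pair (replaceAt a {p | false :: p ∈ P} r) (replaceAt b {p | true :: p ∈ P} r)
  | Term.enc a b, P, r =>
      if [] ∈ P then r
      else Term.enc (replaceAt a {p | false :: p ∈ P} r) (replaceAt b {p | true :: p ∈ P} r)
  | t, P, r => if [] ∈ P then r else t

/-- `Qpos t p`: the root position together with all positions `q ++ [i]` of `t`
where `q` is a proper prefix of `p`. -/
def Qpos (t : Term) (p : List Bool) : Set (List Bool) :=
  insert [] {q | q ∈ positions t ∧ ∃ q' i, q = q' ++ [i] ∧ q' <+: p ∧ q' ≠ p}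

/-- Abstractable positions of `t` with respect to `S`. -/
def absPos (inv : Term → Term) (S : Set Term) (t : Term) : Set (List Bool) :=
  {p | p ∈ positions t ∧ ∀ q ∈ Qpos t p, ∀ s, subtermAt t q = some s → dy inv S s}

/-! ## Assertions: `∃ bv. (l ⋈ r)` -/

structure Assertion : Type where
  bv : List ℕ
  l : Term
  r : Term
deriving DecidableEq

namespace Assertion

def bvSet (α : Assertion) : Set ℕ := {x | x ∈ α.bv}
def fv (α : Assertion) : Set ℕ := (α.l.tvars ∪ α.r.tvars) \ α.bvSet
def vars (α : Assertion) : Set ℕ := α.l.tvars ∪ α.r.tvars ∪ α.bvSet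
def subterms (α : Assertion) : Set Term := α.l.subterms ∪ α.r.subterms

end Assertion

def afvSet (A : Set Assertion) : Set ℕ := ⋃ β ∈ A, β.fv
def abvSet (A : Set Assertion) : Set ℕ := ⋃ β ∈ A, β.bvSet
def aVarsSet (A : Set Assertion) : Set ℕ := ⋃ β ∈ A, β.vars
def aSubtermsSet (A : Set Assertion) : Set Term := ⋃ β ∈ A, β.subterms

/-- The public terms of an assertion: maximal subterms containing no quantifiable
variable (`Vq` is the set of quantifiable variables). -/
def pubs (Vq : Set ℕ) (α : Assertion) : Set Term :=
  {t | t ∈ α.subterms ∧ t.tvars ∩ Vq = ∅ ∧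
    ¬ ∃ u ∈ α.subterms, t ≠ u ∧ t ∈ u.subterms ∧ u.tvars ∩ Vq = ∅}

/-- prepend an existential quantifier -/
def exA (x : ℕ) (α : Assertion) : Assertion := ⟨x :: α.bv, α.l, α.r⟩

/-- The `0^k` prefix of term positions of an assertion. -/
def prefixL (α : Assertion) : List Bool := List.replicate α.bv.length false

/-- Positions of an assertion at which the variable `x` occurs. -/
def aPosOf (x : ℕ) (α : Assertion) : Set (List Bool) :=
  (fun p => prefixL α ++ false :: p) '' posof x α.l ∪
  (fun p => prefixL α ++ true :: p) '' posof x α.r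

/-- Replace the subterms at every (assertion) position in `P` by `r`. -/
noncomputable def aReplace (α : Assertion) (P : Set (List Bool)) (r : Term) : Assertion :=
  ⟨α.bv,
   replaceAt α.l {p | (prefixL α ++ false :: p) ∈ P} r,
   replaceAt α.r {p | (prefixL α ++ true :: p) ∈ P} r⟩

/-- Abstractable positions of an assertion with respect to `S`. -/
def aAbs (inv : Term → Term) (S : Set Term) (α : Assertion) : Set (List Bool) :=
  (fun p => prefixL α ++ false :: p) '' absPos inv (S ∪ varTerms α.bvSet) α.l ∪
  (fun p => prefixL α ++ true :: p) '' absPos inv (S ∪ varTerms α.bvSet) α.r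

/-! ## The assertion derivation system ⊢a -/

inductive adrv (inv : Term → Term) : Set Term → Set Assertion → Assertion → Prop
  | ax {S A α} : α ∈ A → adrv inv S A α
  | eq {S A t} : dy inv S t → adrv inv S A ⟨[], t, t⟩
  | sym {S A t u} : adrv inv S A ⟨[], t, u⟩ → adrv inv S A ⟨[], u, t⟩
  | trans {S A t u v} : adrv inv S A ⟨[], t, u⟩ → adrv inv S A ⟨[], u, v⟩ →
      adrv inv S A ⟨[], t, v⟩
  | consPair {S A t0 t1 u0 u1} : adrv inv S A ⟨[], t0, u0⟩ → adrv inv S A ⟨[], t1, u1⟩ →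
      adrv inv S A ⟨[], Term.pair t0 t1, Term.pair u0 u1⟩
  | consEnc {S A t0 t1 u0 u1} : adrv inv S A ⟨[], t0, u0⟩ → adrv inv S A ⟨[], t1, u1⟩ →
      adrv inv S A ⟨[], Term.enc t0 t1, Term.enc u0 u1⟩
  | projPairFst {S A t0 t1 u0 u1} :
      adrv inv S A ⟨[], Term.pair t0 t1, Term.pair u0 u1⟩ →
      dy inv S t0 → dy inv S t1 → dy inv S u0 → dy inv S u1 → adrv inv S A ⟨[], t0, u0⟩
  | projPairSnd {S A t0 t1 u0 u1} :
      adrv inv S A ⟨[], Term.pair t0 t1, Term.pair u0 u1⟩ →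
      dy inv S t0 → dy inv S t1 → dy inv S u0 → dy inv S u1 → adrv inv S A ⟨[], t1, u1⟩
  | projEncFst {S A t0 t1 u0 u1} :
      adrv inv S A ⟨[], Term.enc t0 t1, Term.enc u0 u1⟩ →
      dy inv S t0 → dy inv S t1 → dy inv S u0 → dy inv S u1 → adrv inv S A ⟨[], t0, u0⟩
  | projEncSnd {S A t0 t1 u0 u1} :
      adrv inv S A ⟨[], Term.enc t0 t1, Term.enc u0 u1⟩ →
      dy inv S t0 → dy inv S t1 → dy inv S u0 → dy inv S u1 → adrv inv S A ⟨[], t1, u1⟩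
  | exI {S A α x t} : adrv inv S A (aReplace α (aPosOf x α) t) → dy inv S t →
      aPosOf x α ⊆ aAbs inv (insert (Term.var x) S) α → adrv inv S A (exA x α)
  | exE {S A α x γ} : adrv inv S A (exA x α) →
      adrv inv (insert (Term.var x) S) (insert α A) γ →
      x ∉ sVars S → x ∉ afvSet A → x ∉ γ.fv → adrv inv S A γ

/-- ⊢a without the ∃-elimination rule. -/
inductive adrvNX (inv : Term → Term) : Set Term → Set Assertion → Assertion → Prop
  | ax {S A α} : α ∈ A → adrvNX inv S A α
  | eq {S A t} : dy inv S t → adrvNX inv S A ⟨[], t, t⟩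
  | sym {S A t u} : adrvNX inv S A ⟨[], t, u⟩ → adrvNX inv S A ⟨[], u, t⟩
  | trans {S A t u v} : adrvNX inv S A ⟨[], t, u⟩ → adrvNX inv S A ⟨[], u, v⟩ →
      adrvNX inv S A ⟨[], t, v⟩
  | consPair {S A t0 t1 u0 u1} : adrvNX inv S A ⟨[], t0, u0⟩ → adrvNX inv S A ⟨[], t1, u1⟩ →
      adrvNX inv S A ⟨[], Term.pair t0 t1, Term.pair u0 u1⟩
  | consEnc {S A t0 t1 u0 u1} : adrvNX inv S A ⟨[], t0, u0⟩ → adrvNX inv S A ⟨[], t1, u1⟩ →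
      adrvNX inv S A ⟨[], Term.enc t0 t1, Term.enc u0 u1⟩
  | projPairFst {S A t0 t1 u0 u1} :
      adrvNX inv S A ⟨[], Term.pair t0 t1, Term.pair u0 u1⟩ →
      dy inv S t0 → dy inv S t1 → dy inv S u0 → dy inv S u1 → adrvNX inv S A ⟨[], t0, u0⟩
  | projPairSnd {S A t0 t1 u0 u1} :
      adrvNX inv S A ⟨[], Term.pair t0 t1, Term.pair u0 u1⟩ →
      dy inv S t0 → dy inv S t1 → dy inv S u0 → dy inv S u1 → adrvNX inv S A ⟨[], t1, u1⟩
  | projEncFst {S A t0 t1 u0 u1} :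
      adrvNX inv S A ⟨[], Term.enc t0 t1, Term.enc u0 u1⟩ →
      dy inv S t0 → dy inv S t1 → dy inv S u0 → dy inv S u1 → adrvNX inv S A ⟨[], t0, u0⟩
  | projEncSnd {S A t0 t1 u0 u1} :
      adrvNX inv S A ⟨[], Term.enc t0 t1, Term.enc u0 u1⟩ →
      dy inv S t0 → dy inv S t1 → dy inv S u0 → dy inv S u1 → adrvNX inv S A ⟨[], t1, u1⟩
  | exI {S A α x t} : adrvNX inv S A (aReplace α (aPosOf x α) t) → dy inv S t →
      aPosOf x α ⊆ aAbs inv (insert (Term.var x) S) α → adrvNX inv S A (exA x α)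

/-- The equality fragment ⊢eq : derivability of equalities `t ⋈ u` from a set `T` of
terms and a set `E` of equalities, without the quantifier rules. -/
inductive eqdrv (inv : Term → Term) (T : Set Term) (E : Set (Term × Term)) :
    Term → Term → Prop
  | ax {t u} : (t, u) ∈ E → eqdrv inv T E t u
  | eq {t} : dy inv T t → eqdrv inv T E t t
  | sym {t u} : eqdrv inv T E t u → eqdrv inv T E u t
  | trans {t u v} : eqdrv inv T E t u → eqdrv inv T E u v → eqdrv inv T E t v
  | consPair {t0 t1 u0 u1} : eqdrv inv T E t0 u0 → eqdrv inv T E t1 u1 →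
      eqdrv inv T E (Term.pair t0 t1) (Term.pair u0 u1)
  | consEnc {t0 t1 u0 u1} : eqdrv inv T E t0 u0 → eqdrv inv T E t1 u1 →
      eqdrv inv T E (Term.enc t0 t1) (Term.enc u0 u1)
  | projPairFst {t0 t1 u0 u1} : eqdrv inv T E (Term.pair t0 t1) (Term.pair u0 u1) →
      dy inv T t0 → dy inv T t1 → dy inv T u0 → dy inv T u1 → eqdrv inv T E t0 u0
  | projPairSnd {t0 t1 u0 u1} : eqdrv inv T E (Term.pair t0 t1) (Term.pair u0 u1) →
      dy inv T t0 → dy inv T t1 → dy inv T u0 → dy inv T u1 → eqdrv inv T E t1 u1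
  | projEncFst {t0 t1 u0 u1} : eqdrv inv T E (Term.enc t0 t1) (Term.enc u0 u1) →
      dy inv T t0 → dy inv T t1 → dy inv T u0 → dy inv T u1 → eqdrv inv T E t0 u0
  | projEncSnd {t0 t1 u0 u1} : eqdrv inv T E (Term.enc t0 t1) (Term.enc u0 u1) →
      dy inv T t0 → dy inv T t1 → dy inv T u0 → dy inv T u1 → eqdrv inv T E t1 u1

/-! ## Sanitized pairs, kernels, purity, consistency -/

/-- `(S;A)` is sanitized: free variables avoid `Vq`, bound variables are from `Vq`,
and the public terms of each assertion of `A` belong to `S`. -/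
def sanitized (Vq : Set ℕ) (S : Set Term) (A : Set Assertion) : Prop :=
  ((sVars S ∪ afvSet A) ∩ Vq = ∅) ∧ (∀ β ∈ A, β.bvSet ⊆ Vq) ∧ (∀ β ∈ A, pubs Vq β ⊆ S)

def kerT (S : Set Term) (A : Set Assertion) : Set Term := S ∪ varTerms (abvSet A)
def kerE (A : Set Assertion) : Set (Term × Term) := {e | ∃ β ∈ A, e = (β.l, β.r)}
def kerA (A : Set Assertion) : Set Assertion := {γ | ∃ β ∈ A, γ = Assertion.mk [] β.l β.r}

/-- The set of assertions corresponding to a set of equalities. -/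
def EtoA (E : Set (Term × Term)) : Set Assertion := {γ | ∃ e ∈ E, γ = Assertion.mk [] e.1 e.2}

/-- `(T;E)` is pure if it is the kernel of some sanitized pair. -/
def isPure (Vq : Set ℕ) (T : Set Term) (E : Set (Term × Term)) : Prop :=
  ∃ S A, sanitized Vq S A ∧ T = kerT S A ∧ E = kerE A

/-- `(T;E)` is consistent if some ground substitution unifies every equality in `E`. -/
def consistentE (E : Set (Term × Term)) : Prop :=
  ∃ lam : Subst, lam.isGround ∧ ∀ e ∈ E, lam.app e.1 = lam.app e.2

/-- `M`-bounded substitution: every image has at most `M` distinct subterms. -/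
def boundedSub (M : ℕ) (μ : Subst) : Prop :=
  ∀ x ∈ μ.dom, (Term.subterms (μ x)).ncard ≤ M



/-! ## Dolev-Yao proof trees -/

inductive DPT : Type
  | ax (t : Term)
  | pair (p q : DPT)
  | enc (p q : DPT)
  | fst (p : DPT)
  | snd (p : DPT)
  | dec (p q : DPT)

namespace DPT

/-- The conclusion of a DY proof tree, if it is well-formed. -/
def concl (inv : Term → Term) : DPT → Option Term
  | ax t => some t
  | pair p q =>
      match concl inv p, concl inv q with
      | some a, some b => some (Term.pair a b)
      | _, _ => none
  | enc p q =>
      match concl inv p, concl inv q with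
      | some a, some b => some (Term.enc a b)
      | _, _ => none
  | fst p =>
      match concl inv p with
      | some (Term.pair a _) => some a
      | _ => none
  | snd p =>
      match concl inv p with
      | some (Term.pair _ b) => some b
      | _ => none
  | dec p q =>
      match concl inv p, concl inv q with
      | some (Term.enc a k), some k' => if k' = inv k then some a else none
      | _, _ => none

/-- Validity of a DY proof tree from the set `X`. -/
def valid (inv : Term → Term) (X : Set Term) : DPT → Prop
  | ax t => t ∈ X
  | pair p q => valid inv X p ∧ valid inv X q
  | enc p q => valid inv X p ∧ valid inv X q
  | fst p => valid inv X p ∧ ∃ a b, concl inv p = some (Term.pair a b)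
  | snd p => valid inv X p ∧ ∃ a b, concl inv p = some (Term.pair a b)
  | dec p q => valid inv X p ∧ valid inv X q ∧
      ∃ a k, concl inv p = some (Term.enc a k) ∧ concl inv q = some (inv k)

def endsConstructor : DPT → Prop
  | pair _ _ => True
  | enc _ _ => True
  | _ => False

def endsDestructor : DPT → Prop
  | fst _ => True
  | snd _ => True
  | dec _ _ => True
  | _ => False

/-- Normal DY proofs: no constructor conclusion is the major premise of a destructor. -/
def normal : DPT → Prop
  | ax _ => True
  | pair p q => normal p ∧ normal q
  | enc p q => normal p ∧ normal q
  | fst p => normal p ∧ ¬ endsConstructor p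
  | snd p => normal p ∧ ¬ endsConstructor p
  | dec p q => normal p ∧ normal q ∧ ¬ endsConstructor p

/-- All terms occurring in a DY proof tree (conclusions of subproofs). -/
def termSet (inv : Term → Term) : DPT → Set Term
  | ax t => {t}
  | pair p q => {a | concl inv (pair p q) = some a} ∪ termSet inv p ∪ termSet inv q
  | enc p q => {a | concl inv (enc p q) = some a} ∪ termSet inv p ∪ termSet inv q
  | fst p => {a | concl inv (fst p) = some a} ∪ termSet inv p
  | snd p => {a | concl inv (snd p) = some a} ∪ termSet inv p
  | dec p q => {a | concl inv (dec p q) = some a} ∪ termSet inv p ∪ termSet inv q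

/-- Typed DY proof w.r.t. a set `G`: every subproof ends in a constructor rule or
has its conclusion in `G`. -/
def typed (inv : Term → Term) (G : Set Term) : DPT → Prop
  | ax t => t ∈ G
  | pair p q => typed inv G p ∧ typed inv G q
  | enc p q => typed inv G p ∧ typed inv G q
  | fst p => typed inv G p ∧ ∀ a, concl inv (fst p) = some a → a ∈ G
  | snd p => typed inv G p ∧ ∀ a, concl inv (snd p) = some a → a ∈ G
  | dec p q => typed inv G p ∧ typed inv G q ∧ ∀ a, concl inv (dec p q) = some a → a ∈ G

end DPT

/-! ## Equality proof trees (the system ⊢eq), with n-ary trans -/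

inductive EPT : Type
  | ax (t u : Term)
  | eq (t : Term) (d : DPT)
  | sym (t u : Term) (p : EPT)
  | trans (t u : Term) (ps : List EPT)
  | consPair (t0 u0 t1 u1 : Term) (p q : EPT)
  | consEnc (t0 u0 t1 u1 : Term) (p q : EPT)
  | projPairFst (t0 t1 u0 u1 : Term) (p : EPT)
  | projPairSnd (t0 t1 u0 u1 : Term) (p : EPT)
  | projEncFst (t0 t1 u0 u1 : Term) (p : EPT)
  | projEncSnd (t0 t1 u0 u1 : Term) (p : EPT)

namespace EPT

/-- The conclusion `t ⋈ u` of an equality proof tree. -/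
def concl : EPT → Term × Term
  | ax t u => (t, u)
  | eq t _ => (t, t)
  | sym t u _ => (t, u)
  | trans t u _ => (t, u)
  | consPair t0 u0 t1 u1 _ _ => (Term.pair t0 t1, Term.pair u0 u1)
  | consEnc t0 u0 t1 u1 _ _ => (Term.enc t0 t1, Term.enc u0 u1)
  | projPairFst t0 _ u0 _ _ => (t0, u0)
  | projPairSnd _ t1 _ u1 _ => (t1, u1)
  | projEncFst t0 _ u0 _ _ => (t0, u0)
  | projEncSnd _ t1 _ u1 _ => (t1, u1)

/-- Immediate subproof relation. -/
inductive Sub : EPT → EPT → Prop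
  | sym {t u p} : Sub p (EPT.sym t u p)
  | trans {t u ps p} : p ∈ ps → Sub p (EPT.trans t u ps)
  | consPairL {t0 u0 t1 u1 p q} : Sub p (EPT.consPair t0 u0 t1 u1 p q)
  | consPairR {t0 u0 t1 u1 p q} : Sub q (EPT.consPair t0 u0 t1 u1 p q)
  | consEncL {t0 u0 t1 u1 p q} : Sub p (EPT.consEnc t0 u0 t1 u1 p q)
  | consEncR {t0 u0 t1 u1 p q} : Sub q (EPT.consEnc t0 u0 t1 u1 p q)
  | projPairFst {t0 t1 u0 u1 p} : Sub p (EPT.projPairFst t0 t1 u0 u1 p)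
  | projPairSnd {t0 t1 u0 u1 p} : Sub p (EPT.projPairSnd t0 t1 u0 u1 p)
  | projEncFst {t0 t1 u0 u1 p} : Sub p (EPT.projEncFst t0 t1 u0 u1 p)
  | projEncSnd {t0 t1 u0 u1 p} : Sub p (EPT.projEncSnd t0 t1 u0 u1 p)

/-- `Subproof p q`: `p` is a (not necessarily proper) subproof of `q`. -/
def Subproof : EPT → EPT → Prop := Relation.ReflTransGen Sub

def isAx : EPT → Prop
  | ax _ _ => True
  | _ => False

def isTrans : EPT → Prop
  | trans _ _ _ => True
  | _ => False

def isCons : EPT → Prop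
  | consPair _ _ _ _ _ _ => True
  | consEnc _ _ _ _ _ _ => True
  | _ => False

def isProj : EPT → Prop
  | projPairFst _ _ _ _ _ => True
  | projPairSnd _ _ _ _ _ => True
  | projEncFst _ _ _ _ _ => True
  | projEncSnd _ _ _ _ _ => True
  | _ => False

/-- The ⊢eq proof contains an occurrence of the cons rule. -/
def containsCons (π : EPT) : Prop := ∃ π', Subproof π' π ∧ isCons π'

/-- Local validity of the last rule of an equality proof tree. -/
def localValid (inv : Term → Term) (T : Set Term) (E : Set (Term × Term)) : EPT → Prop
  | ax t u => (t, u) ∈ E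
  | eq t d => DPT.valid inv T d ∧ DPT.concl inv d = some t
  | sym t u p => concl p = (u, t)
  | trans t u ps =>
      ps ≠ [] ∧ (ps.head?.map fun p => (concl p).1) = some t ∧
      (ps.getLast?.map fun p => (concl p).2) = some u ∧
      List.Chain' (fun p q => (concl p).2 = (concl q).1) ps
  | consPair t0 u0 t1 u1 p q => concl p = (t0, u0) ∧ concl q = (t1, u1)
  | consEnc t0 u0 t1 u1 p q => concl p = (t0, u0) ∧ concl q = (t1, u1)
  | projPairFst t0 t1 u0 u1 p => concl p = (Term.pair t0 t1, Term.pair u0 u1) ∧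
      dy inv T t0 ∧ dy inv T t1 ∧ dy inv T u0 ∧ dy inv T u1
  | projPairSnd t0 t1 u0 u1 p => concl p = (Term.pair t0 t1, Term.pair u0 u1) ∧
      dy inv T t0 ∧ dy inv T t1 ∧ dy inv T u0 ∧ dy inv T u1
  | projEncFst t0 t1 u0 u1 p => concl p = (Term.enc t0 t1, Term.enc u0 u1) ∧
      dy inv T t0 ∧ dy inv T t1 ∧ dy inv T u0 ∧ dy inv T u1
  | projEncSnd t0 t1 u0 u1 p => concl p = (Term.enc t0 t1, Term.enc u0 u1) ∧
      dy inv T t0 ∧ dy inv T t1 ∧ dy inv T u0 ∧ dy inv T u1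

/-- Validity of an equality proof tree from `(T;E)`. -/
def valid (inv : Term → Term) (T : Set Term) (E : Set (Term × Term)) (π : EPT) : Prop :=
  ∀ π', Subproof π' π → localValid inv T E π'

/-- Local normality conditions for the last rule. -/
def localNormal : EPT → Prop
  | ax _ _ => True
  | eq _ d => DPT.normal d ∧ DPT.endsDestructor d
  | sym _ _ p => isAx p
  | trans _ _ ps =>
      (∀ p ∈ ps, ¬ isTrans p ∧ (concl p).1 ≠ (concl p).2) ∧
      List.Chain' (fun p q => ¬ (isCons p ∧ isCons q)) ps
  | consPair _ _ _ _ _ _ => True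
  | consEnc _ _ _ _ _ _ => True
  | projPairFst _ _ _ _ p => ¬ containsCons p
  | projPairSnd _ _ _ _ p => ¬ containsCons p
  | projEncFst _ _ _ _ p => ¬ containsCons p
  | projEncSnd _ _ _ _ p => ¬ containsCons p

/-- A normal ⊢eq proof. -/
def normalP (π : EPT) : Prop := ∀ π', Subproof π' π → localNormal π'

/-- The DY subproof attached to an `eq` node, if any. -/
def dSub : EPT → Option DPT
  | eq _ d => some d
  | _ => none

/-- All terms occurring in an ⊢eq proof: the terms of the conclusions of all
subproofs, including the DY subproofs. -/
def termSet (inv : Term → Term) (π : EPT) : Set Term :=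
  {a | ∃ π', Subproof π' π ∧
    (a = (concl π').1 ∨ a = (concl π').2 ∨
      ∃ d, dSub π' = some d ∧ a ∈ DPT.termSet inv d)}

/-- Typed ⊢eq proof w.r.t. a set `Typ` of typed terms: every subproof contains
cons, or proves a trivial equality, or has typed conclusion terms. -/
def typedP (Typ : Set Term) (π : EPT) : Prop :=
  ∀ π', Subproof π' π →
    containsCons π' ∨ (concl π').1 = (concl π').2 ∨
      ((concl π').1 ∈ Typ ∧ (concl π').2 ∈ Typ)

end EPT



/-! ## The fixed run setting -/

/-- A fixed run of a protocol: at step `i` (for `1 ≤ i ≤ n`) the honest agent `uᵢ`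
receives the assertion `β i` from the intruder and sends the assertion `α i`;
`(T i; E i)` and `(U i; F i)` are the kernels of the knowledge states of the
intruder and of `uᵢ`; `σ` is the ground substitution of the run, `μ i`/`θ i` the
witness substitutions, `ω` their composition, and `m` the spare name. -/
structure RunSetting : Type where
  inv : Term → Term
  Vq : Set ℕ
  n : ℕ
  β : ℕ → Assertion
  α : ℕ → Assertion
  T : ℕ → Set Term
  E : ℕ → Set (Term × Term)
  U : ℕ → Set Term
  F : ℕ → Set (Term × Term)
  σ : Subst
  μ : ℕ → Subst
  θ : ℕ → Subst
  ω : Subst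
  m : ℕ
  -- well-formedness of the communicated assertions
  hβbv : ∀ i, 1 ≤ i → i ≤ n → (β i).bvSet ⊆ Vq
  hαbv : ∀ i, 1 ≤ i → i ≤ n → (α i).bvSet ⊆ Vq
  hβfv : ∀ i, 1 ≤ i → i ≤ n → (β i).fv ∩ Vq = ∅
  hαfv : ∀ i, 1 ≤ i → i ≤ n → (α i).fv ∩ Vq = ∅
  -- σ is ground, defined on the intruder variables of the run, and fixes Vq
  hσVq : ∀ x ∈ Vq, σ x = Term.var x
  hσground : ∀ x ∈ σ.dom, (σ x).ground
  -- evolution of the kernels of the intruder's knowledge state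
  hT0 : ∀ t ∈ T 0, t.ground
  hE0 : E 0 = ∅
  hTmono : ∀ i, T i ⊆ T (i + 1)
  hEmono : ∀ i, E i ⊆ E (i + 1)
  hTstep : ∀ i, 1 ≤ i → i ≤ n →
    T i = T (i - 1) ∪ pubs Vq (α i) ∪ varTerms (α i).bvSet
  hEstep : ∀ i, 1 ≤ i → i ≤ n → E i = E (i - 1) ∪ {((α i).l, (α i).r)}
  -- knowledge states are finite
  hTfin : ∀ i, i ≤ n → (T i).Finite
  hEfin : ∀ i, i ≤ n → (E i).Finite
  hUfin : ∀ i, i ≤ n → (U i).Finite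
  hFfin : ∀ i, i ≤ n → (F i).Finite
  -- provenance of honest agents' kernels
  hUmem : ∀ i, 1 ≤ i → i ≤ n → ∀ t ∈ U i,
    (∃ x ∈ Vq, t = Term.var x) ∨ t.tvars ⊆ σ.dom
  hFmem : ∀ i, 1 ≤ i → i ≤ n → ∀ e ∈ F i,
    ∃ j, 1 ≤ j ∧ j ≤ i ∧ e = ((β j).l, (β j).r)
  -- variables sent by honest agents were received earlier (Observation 2 of the paper)
  hfvEarlier : ∀ i, 1 ≤ i → i ≤ n → ∀ x ∈ (α i).fv,
    ∃ j, 1 ≤ j ∧ j ≤ i ∧ x ∈ (β j).fv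
  -- witness substitutions and the derivability conditions of the run
  hμdom : ∀ i, 1 ≤ i → i ≤ n → (μ i).dom ⊆ (β i).bvSet
  hθdom : ∀ i, 1 ≤ i → i ≤ n → (θ i).dom ⊆ (α i).bvSet
  hμdy : ∀ i, 1 ≤ i → i ≤ n → ∀ x ∈ (μ i).dom,
    dy inv (Subst.app σ '' T (i - 1)) (μ i x)
  hμeq : ∀ i, 1 ≤ i → i ≤ n →
    eqdrv inv (Subst.app σ '' T (i - 1)) (pairImg σ (E (i - 1)))
      (σ.app ((μ i).app (β i).l)) (σ.app ((μ i).app (β i).r))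
  hθdy : ∀ i, 1 ≤ i → i ≤ n → ∀ x ∈ (θ i).dom,
    dy inv (Subst.app σ '' U i) (θ i x)
  hθeq : ∀ i, 1 ≤ i → i ≤ n →
    eqdrv inv (Subst.app σ '' U i) (pairImg σ (F i))
      (σ.app ((θ i).app (α i).l)) (σ.app ((θ i).app (α i).r))
  -- ω is the composition σμ₁θ₁…μₙθₙ
  hωσ : ∀ x, ω.app (σ x) = ω x
  hωμ : ∀ i, 1 ≤ i → i ≤ n → ∀ x, ω.app ((μ i) x) = ω x
  hωθ : ∀ i, 1 ≤ i → i ≤ n → ∀ x, ω.app ((θ i) x) = ω x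
  hωground : ∀ x ∈ ω.dom, (ω x).ground
  hωT : ∀ i, i ≤ n → ∀ t ∈ T i ∪ U i, (ω.app t).ground
  hωE : ∀ i, i ≤ n → ∀ e ∈ E i ∪ F i, (ω.app e.1).ground ∧ (ω.app e.2).ground
  -- the spare name m
  hm : Term.name m ∈ T 0
  hmβ : ∀ i, 1 ≤ i → i ≤ n →
    Term.name m ∉ (β i).subterms ∪ (α i).subterms
  hmμ : ∀ i, 1 ≤ i → i ≤ n → ∀ x ∈ (μ i).dom, Term.name m ∉ (μ i x).subterms
  hmθ : ∀ i, 1 ≤ i → i ≤ n → ∀ x ∈ (θ i).dom, Term.name m ∉ (θ i x).subterms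

namespace RunSetting

variable (R : RunSetting)

/-- The public terms of the `i`-th intruder send. -/
def IT (i : ℕ) : Set Term := pubs R.Vq (R.β i)

/-- The public terms of the `i`-th honest agent send. -/
def HT (i : ℕ) : Set Term := pubs R.Vq (R.α i)

/-- The type set 𝒞 of the run. -/
def C : Set Term :=
  ⋃ i ∈ Set.Iic R.n, (sSubterms (R.T i ∪ R.U i) ∪ pairSubterms (R.E i ∪ R.F i))

/-- The type set 𝒟 = 𝒞 ∖ 𝒱 of the run. -/
def D : Set Term := R.C \ Set.range Term.var

/-- A variable is minimal if its ω-image coincides with the ω-image of no term of 𝒟. -/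
def minimal (x : ℕ) : Prop := x ∈ R.ω.dom ∧ ¬ ∃ t ∈ R.D, R.ω.app t = R.ω x

/-- A term is zappable if it ω-unifies with some minimal variable. -/
def zappable (t : Term) : Prop := ∃ x, R.minimal x ∧ R.ω.app t = R.ω x

/-- The zap of a term: zappable terms get replaced by the spare name `m`. -/
noncomputable def zap : Term → Term
  | Term.var x => Term.var x
  | Term.name k => if R.zappable (Term.name k) then Term.name R.m else Term.name k
  | Term.pair a b =>
      if R.zappable (Term.pair a b) then Term.name R.m
      else Term.pair (zap a) (zap b)
  | Term.enc a b =>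
      if R.zappable (Term.enc a b) then Term.name R.m
      else Term.enc (zap a) (zap b)

/-- The small substitution λ* corresponding to λ. -/
noncomputable def star (lam : Subst) : Subst := fun x => R.zap (lam x)

/-- The set of typed terms: σ(𝒟) ∪ ω(𝒞) ∪ 𝒱_q. -/
def typedSet : Set Term :=
  Subst.app R.σ '' R.D ∪ Subst.app R.ω '' R.C ∪ varTerms R.Vq

/-- A typed term. -/
def typedTerm (t : Term) : Prop := t ∈ R.typedSet

end RunSetting




/-! ## Auxiliary lemmas for Statement 12 -/

section Aux

lemma Term.self_mem_subterms : ∀ t : Term, t ∈ t.subterms := by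
  intro t; cases t <;> simp [Term.subterms]

lemma Term.subterms_trans : ∀ u s t : Term, s ∈ u.subterms → t ∈ s.subterms →
    t ∈ u.subterms := by
  intro u
  induction u with
  | name n => intro s t hs ht; simp [Term.subterms] at hs; subst hs; exact ht
  | var x => intro s t hs ht; simp [Term.subterms] at hs; subst hs; exact ht
  | pair a b iha ihb =>
      intro s t hs ht
      simp only [Term.subterms, Set.mem_insert_iff, Set.mem_union] at hs ⊢
      rcases hs with rfl | hs | hs
      · simpa only [Term.subterms, Set.mem_insert_iff, Set.mem_union] using ht
      · exact Or.inr (Or.inl (iha _ _ hs ht))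
      · exact Or.inr (Or.inr (ihb _ _ hs ht))
  | enc a b iha ihb =>
      intro s t hs ht
      simp only [Term.subterms, Set.mem_insert_iff, Set.mem_union] at hs ⊢
      rcases hs with rfl | hs | hs
      · simpa only [Term.subterms, Set.mem_insert_iff, Set.mem_union] using ht
      · exact Or.inr (Or.inl (iha _ _ hs ht))
      · exact Or.inr (Or.inr (ihb _ _ hs ht))

lemma Term.tvars_mono : ∀ u s : Term, s ∈ u.subterms → s.tvars ⊆ u.tvars := by
  intro u
  induction u with
  | name n => intro s hs; simp [Term.subterms] at hs; subst hs; exact le_refl _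
  | var x => intro s hs; simp [Term.subterms] at hs; subst hs; exact le_refl _
  | pair a b iha ihb =>
      intro s hs
      simp only [Term.subterms, Set.mem_insert_iff, Set.mem_union] at hs
      rcases hs with rfl | hs | hs
      · exact le_refl _
      · exact (iha _ hs).trans (by simp [Term.tvars])
      · exact (ihb _ hs).trans (by simp [Term.tvars])
  | enc a b iha ihb =>
      intro s hs
      simp only [Term.subterms, Set.mem_insert_iff, Set.mem_union] at hs
      rcases hs with rfl | hs | hs
      · exact le_refl _
      · exact (iha _ hs).trans (by simp [Term.tvars])
      · exact (ihb _ hs).trans (by simp [Term.tvars])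

/-- size of a term -/
def Term.tsize : Term → ℕ
  | Term.name _ => 1
  | Term.var _ => 1
  | Term.pair a b => a.tsize + b.tsize + 1
  | Term.enc a b => a.tsize + b.tsize + 1

lemma Term.tsize_le_of_mem : ∀ u s : Term, s ∈ u.subterms → s.tsize ≤ u.tsize := by
  intro u
  induction u with
  | name n => intro s hs; simp [Term.subterms] at hs; subst hs; exact le_refl _
  | var x => intro s hs; simp [Term.subterms] at hs; subst hs; exact le_refl _
  | pair a b iha ihb =>
      intro s hs
      simp only [Term.subterms, Set.mem_insert_iff, Set.mem_union] at hs
      rcases hs with rfl | hs | hs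
      · exact le_refl _
      · have := iha _ hs; simp only [Term.tsize]; omega
      · have := ihb _ hs; simp only [Term.tsize]; omega
  | enc a b iha ihb =>
      intro s hs
      simp only [Term.subterms, Set.mem_insert_iff, Set.mem_union] at hs
      rcases hs with rfl | hs | hs
      · exact le_refl _
      · have := iha _ hs; simp only [Term.tsize]; omega
      · have := ihb _ hs; simp only [Term.tsize]; omega

lemma Term.tsize_lt_of_mem : ∀ u s : Term, s ∈ u.subterms → s ≠ u → s.tsize < u.tsize := by
  intro u
  induction u with
  | name n => intro s hs hne; simp [Term.subterms] at hs; exact absurd hs hne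
  | var x => intro s hs hne; simp [Term.subterms] at hs; exact absurd hs hne
  | pair a b iha ihb =>
      intro s hs hne
      simp only [Term.subterms, Set.mem_insert_iff, Set.mem_union] at hs
      rcases hs with rfl | hs | hs
      · exact absurd rfl hne
      · have := Term.tsize_le_of_mem _ _ hs; simp only [Term.tsize]; omega
      · have := Term.tsize_le_of_mem _ _ hs; simp only [Term.tsize]; omega
  | enc a b iha ihb =>
      intro s hs hne
      simp only [Term.subterms, Set.mem_insert_iff, Set.mem_union] at hs
      rcases hs with rfl | hs | hs
      · exact absurd rfl hne
      · have := Term.tsize_le_of_mem _ _ hs; simp only [Term.tsize]; omega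
      · have := Term.tsize_le_of_mem _ _ hs; simp only [Term.tsize]; omega

lemma Subst.app_mem_subterms (σ : Subst) : ∀ u s : Term, s ∈ u.subterms →
    σ.app s ∈ (σ.app u).subterms := by
  intro u
  induction u with
  | name n => intro s hs; simp [Term.subterms] at hs; subst hs; exact Term.self_mem_subterms _
  | var x => intro s hs; simp [Term.subterms] at hs; subst hs; exact Term.self_mem_subterms _
  | pair a b iha ihb =>
      intro s hs
      simp only [Term.subterms, Set.mem_insert_iff, Set.mem_union] at hs
      rcases hs with rfl | hs | hs
      · exact Term.self_mem_subterms _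
      · simp only [Subst.app, Term.subterms, Set.mem_insert_iff, Set.mem_union]
        exact Or.inr (Or.inl (iha _ hs))
      · simp only [Subst.app, Term.subterms, Set.mem_insert_iff, Set.mem_union]
        exact Or.inr (Or.inr (ihb _ hs))
  | enc a b iha ihb =>
      intro s hs
      simp only [Term.subterms, Set.mem_insert_iff, Set.mem_union] at hs
      rcases hs with rfl | hs | hs
      · exact Term.self_mem_subterms _
      · simp only [Subst.app, Term.subterms, Set.mem_insert_iff, Set.mem_union]
        exact Or.inr (Or.inl (iha _ hs))
      · simp only [Subst.app, Term.subterms, Set.mem_insert_iff, Set.mem_union]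
        exact Or.inr (Or.inr (ihb _ hs))

/-- strict size decrease under a substitution image -/
lemma Subst.tsize_app_lt (σ : Subst) : ∀ u s : Term, s ∈ u.subterms → s ≠ u →
    (σ.app s).tsize < (σ.app u).tsize := by
  intro u
  induction u with
  | name n => intro s hs hne; simp [Term.subterms] at hs; exact absurd hs hne
  | var x => intro s hs hne; simp [Term.subterms] at hs; exact absurd hs hne
  | pair a b iha ihb =>
      intro s hs hne
      simp only [Term.subterms, Set.mem_insert_iff, Set.mem_union] at hs
      rcases hs with rfl | hs | hs
      · exact absurd rfl hne
      · have := Term.tsize_le_of_mem _ _ (σ.app_mem_subterms a s hs)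
        simp only [Subst.app, Term.tsize]; omega
      · have := Term.tsize_le_of_mem _ _ (σ.app_mem_subterms b s hs)
        simp only [Subst.app, Term.tsize]; omega
  | enc a b iha ihb =>
      intro s hs hne
      simp only [Term.subterms, Set.mem_insert_iff, Set.mem_union] at hs
      rcases hs with rfl | hs | hs
      · exact absurd rfl hne
      · have := Term.tsize_le_of_mem _ _ (σ.app_mem_subterms a s hs)
        simp only [Subst.app, Term.tsize]; omega
      · have := Term.tsize_le_of_mem _ _ (σ.app_mem_subterms b s hs)
        simp only [Subst.app, Term.tsize]; omega

/-- decomposition of subterms of a substitution instance -/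
lemma subterm_app_decomp (σ : Subst) : ∀ u t : Term, t ∈ (σ.app u).subterms →
    (∃ s ∈ u.subterms, (∀ x, s ≠ Term.var x) ∧ t = σ.app s) ∨
    (∃ x ∈ u.tvars, t ∈ (σ x).subterms) := by
  intro u
  induction u with
  | name n =>
      intro t ht
      simp only [Subst.app, Term.subterms, Set.mem_singleton_iff] at ht
      exact Or.inl ⟨Term.name n, Term.self_mem_subterms _, by simp, by simp [Subst.app, ht]⟩
  | var x =>
      intro t ht
      exact Or.inr ⟨x, by simp [Term.tvars], ht⟩
  | pair a b iha ihb =>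
      intro t ht
      simp only [Subst.app, Term.subterms, Set.mem_insert_iff, Set.mem_union] at ht
      rcases ht with rfl | ht | ht
      · exact Or.inl ⟨Term.pair a b, Term.self_mem_subterms _, by simp, by simp [Subst.app]⟩
      · rcases iha _ ht with ⟨s, hs, hnv, rfl⟩ | ⟨x, hx, hx2⟩
        · exact Or.inl ⟨s, by
            simp only [Term.subterms, Set.mem_insert_iff, Set.mem_union]
            exact Or.inr (Or.inl hs), hnv, rfl⟩
        · exact Or.inr ⟨x, by simp [Term.tvars]; exact Or.inl hx, hx2⟩
      · rcases ihb _ ht with ⟨s, hs, hnv, rfl⟩ | ⟨x, hx, hx2⟩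
        · exact Or.inl ⟨s, by
            simp only [Term.subterms, Set.mem_insert_iff, Set.mem_union]
            exact Or.inr (Or.inr hs), hnv, rfl⟩
        · exact Or.inr ⟨x, by simp [Term.tvars]; exact Or.inr hx, hx2⟩
  | enc a b iha ihb =>
      intro t ht
      simp only [Subst.app, Term.subterms, Set.mem_insert_iff, Set.mem_union] at ht
      rcases ht with rfl | ht | ht
      · exact Or.inl ⟨Term.enc a b, Term.self_mem_subterms _, by simp, by simp [Subst.app]⟩
      · rcases iha _ ht with ⟨s, hs, hnv, rfl⟩ | ⟨x, hx, hx2⟩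
        · exact Or.inl ⟨s, by
            simp only [Term.subterms, Set.mem_insert_iff, Set.mem_union]
            exact Or.inr (Or.inl hs), hnv, rfl⟩
        · exact Or.inr ⟨x, by simp [Term.tvars]; exact Or.inl hx, hx2⟩
      · rcases ihb _ ht with ⟨s, hs, hnv, rfl⟩ | ⟨x, hx, hx2⟩
        · exact Or.inl ⟨s, by
            simp only [Term.subterms, Set.mem_insert_iff, Set.mem_union]
            exact Or.inr (Or.inr hs), hnv, rfl⟩
        · exact Or.inr ⟨x, by simp [Term.tvars]; exact Or.inr hx, hx2⟩

lemma dy_mono {inv : Term → Term} {X Y : Set Term} (hXY : X ⊆ Y) {t : Term}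
    (h : dy inv X t) : dy inv Y t := by
  induction h with
  | ax h => exact dy.ax (hXY h)
  | pair _ _ ih1 ih2 => exact dy.pair ih1 ih2
  | enc _ _ ih1 ih2 => exact dy.enc ih1 ih2
  | fst _ ih => exact dy.fst ih
  | snd _ ih => exact dy.snd ih
  | dec _ _ ih1 ih2 => exact dy.dec ih1 ih2

/-- Lemma B: subterms of derivable terms are derivable or subterms of X. -/
lemma dy_subterm {inv : Term → Term} {X : Set Term} {a : Term} (h : dy inv X a) :
    ∀ t ∈ a.subterms, dy inv X t ∨ ∃ u ∈ X, t ∈ u.subterms := by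
  induction h with
  | @ax a h => intro t ht; exact Or.inr ⟨a, h, ht⟩
  | @pair a b h1 h2 ih1 ih2 =>
      intro t ht
      simp only [Term.subterms, Set.mem_insert_iff, Set.mem_union] at ht
      rcases ht with rfl | ht | ht
      · exact Or.inl (dy.pair h1 h2)
      · exact ih1 _ ht
      · exact ih2 _ ht
  | @enc a b h1 h2 ih1 ih2 =>
      intro t ht
      simp only [Term.subterms, Set.mem_insert_iff, Set.mem_union] at ht
      rcases ht with rfl | ht | ht
      · exact Or.inl (dy.enc h1 h2)
      · exact ih1 _ ht
      · exact ih2 _ ht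
  | @fst a b h ih =>
      intro t ht
      exact ih _ (by
        simp only [Term.subterms, Set.mem_insert_iff, Set.mem_union]
        exact Or.inr (Or.inl ht))
  | @snd a b h ih =>
      intro t ht
      exact ih _ (by
        simp only [Term.subterms, Set.mem_insert_iff, Set.mem_union]
        exact Or.inr (Or.inr ht))
  | @dec a k h1 h2 ih1 ih2 =>
      intro t ht
      exact ih1 _ (by
        simp only [Term.subterms, Set.mem_insert_iff, Set.mem_union]
        exact Or.inr (Or.inl ht))

/-- Lemma N: the conclusion of a valid normal proof not ending in a constructor
is a subterm of X. -/
lemma dpt_concl_subterm {inv : Term → Term} {X : Set Term} :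
    ∀ d : DPT, DPT.valid inv X d → DPT.normal d → ¬ DPT.endsConstructor d →
    ∀ t, DPT.concl inv d = some t → ∃ u ∈ X, t ∈ u.subterms := by
  intro d
  induction d with
  | ax s =>
      intro hv _ _ t hc
      simp only [DPT.concl, Option.some.injEq] at hc
      subst hc
      exact ⟨s, hv, Term.self_mem_subterms _⟩
  | pair p q ihp ihq => intro _ _ hnc; exact absurd trivial hnc
  | enc p q ihp ihq => intro _ _ hnc; exact absurd trivial hnc
  | fst p ihp =>
      intro hv hn _ t hc
      obtain ⟨hvp, a, b, hab⟩ := hv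
      obtain ⟨hnp, hncp⟩ := hn
      simp only [DPT.concl, hab, Option.some.injEq] at hc
      subst hc
      obtain ⟨u, hu, hsub⟩ := ihp hvp hnp hncp _ hab
      refine ⟨u, hu, Term.subterms_trans _ _ _ hsub ?_⟩
      simp only [Term.subterms, Set.mem_insert_iff, Set.mem_union]
      exact Or.inr (Or.inl (Term.self_mem_subterms _))
  | snd p ihp =>
      intro hv hn _ t hc
      obtain ⟨hvp, a, b, hab⟩ := hv
      obtain ⟨hnp, hncp⟩ := hn
      simp only [DPT.concl, hab, Option.some.injEq] at hc
      subst hc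
      obtain ⟨u, hu, hsub⟩ := ihp hvp hnp hncp _ hab
      refine ⟨u, hu, Term.subterms_trans _ _ _ hsub ?_⟩
      simp only [Term.subterms, Set.mem_insert_iff, Set.mem_union]
      exact Or.inr (Or.inr (Term.self_mem_subterms _))
  | dec p q ihp ihq =>
      intro hv hn _ t hc
      obtain ⟨hvp, hvq, a, k, hab, hq⟩ := hv
      obtain ⟨hnp, hnq, hncp⟩ := hn
      simp only [DPT.concl, hab, hq] at hc
      simp only [if_true, Option.some.injEq] at hc
      subst hc
      obtain ⟨u, hu, hsub⟩ := ihp hvp hnp hncp _ hab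
      refine ⟨u, hu, Term.subterms_trans _ _ _ hsub ?_⟩
      simp only [Term.subterms, Set.mem_insert_iff, Set.mem_union]
      exact Or.inr (Or.inl (Term.self_mem_subterms _))

/-- The closure of DY-derivable terms and sides of E under pairing/encryption. -/
inductive Qset (inv : Term → Term) (X : Set Term) (Ep : Set (Term × Term)) : Term → Prop
  | dy {a} : dy inv X a → Qset inv X Ep a
  | sideL {a b} : (a, b) ∈ Ep → Qset inv X Ep a
  | sideR {a b} : (a, b) ∈ Ep → Qset inv X Ep b
  | pair {a b} : Qset inv X Ep a → Qset inv X Ep b → Qset inv X Ep (Term.pair a b)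
  | enc {a b} : Qset inv X Ep a → Qset inv X Ep b → Qset inv X Ep (Term.enc a b)

/-- Lemma E: both sides of a ⊢eq-derivable equality are in the Q-closure. -/
lemma eqdrv_Qset {inv : Term → Term} {X : Set Term} {Ep : Set (Term × Term)} {a b : Term}
    (h : eqdrv inv X Ep a b) : Qset inv X Ep a ∧ Qset inv X Ep b := by
  induction h with
  | ax h => exact ⟨Qset.sideL h, Qset.sideR h⟩
  | eq h => exact ⟨Qset.dy h, Qset.dy h⟩
  | sym _ ih => exact ⟨ih.2, ih.1⟩
  | trans _ _ ih1 ih2 => exact ⟨ih1.1, ih2.2⟩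
  | consPair _ _ ih1 ih2 => exact ⟨Qset.pair ih1.1 ih2.1, Qset.pair ih1.2 ih2.2⟩
  | consEnc _ _ ih1 ih2 => exact ⟨Qset.enc ih1.1 ih2.1, Qset.enc ih1.2 ih2.2⟩
  | projPairFst _ h0 h1 h2 h3 ih => exact ⟨Qset.dy h0, Qset.dy h2⟩
  | projPairSnd _ h0 h1 h2 h3 ih => exact ⟨Qset.dy h1, Qset.dy h3⟩
  | projEncFst _ h0 h1 h2 h3 ih => exact ⟨Qset.dy h0, Qset.dy h2⟩
  | projEncSnd _ h0 h1 h2 h3 ih => exact ⟨Qset.dy h1, Qset.dy h3⟩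

/-- soundness of ⊢eq with respect to a unifier of E -/
lemma eqdrv_sound {inv : Term → Term} {X : Set Term} {Ep : Set (Term × Term)}
    (lam : Subst) (hE : ∀ e ∈ Ep, lam.app e.1 = lam.app e.2) {a b : Term}
    (h : eqdrv inv X Ep a b) : lam.app a = lam.app b := by
  induction h with
  | ax h => exact hE _ h
  | eq h => rfl
  | sym _ ih => exact ih.symm
  | trans _ _ ih1 ih2 => exact ih1.trans ih2
  | consPair _ _ ih1 ih2 => simp only [Subst.app]; rw [ih1, ih2]
  | consEnc _ _ ih1 ih2 => simp only [Subst.app]; rw [ih1, ih2]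
  | projPairFst _ _ _ _ _ ih => simp only [Subst.app, Term.pair.injEq] at ih; exact ih.1
  | projPairSnd _ _ _ _ _ ih => simp only [Subst.app, Term.pair.injEq] at ih; exact ih.2
  | projEncFst _ _ _ _ _ ih => simp only [Subst.app, Term.enc.injEq] at ih; exact ih.1
  | projEncSnd _ _ _ _ _ ih => simp only [Subst.app, Term.enc.injEq] at ih; exact ih.2

/-- composition on images: if ω ∘ f = ω pointwise on variables then on all terms. -/
lemma app_comp_eq (ω f : Subst) (hcomp : ∀ x, ω.app (f x) = ω x) :
    ∀ u : Term, ω.app (f.app u) = ω.app u := by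
  intro u
  induction u with
  | name n => rfl
  | var x => exact hcomp x
  | pair a b iha ihb => simp only [Subst.app]; rw [iha, ihb]
  | enc a b iha ihb => simp only [Subst.app]; rw [iha, ihb]

end Aux


lemma Term.var_mem_subterms : ∀ (u : Term) (x : ℕ), x ∈ u.tvars → Term.var x ∈ u.subterms := by
  intro u
  induction u with
  | name n => intro x hx; simp [Term.tvars] at hx
  | var y => intro x hx; simp [Term.tvars] at hx; subst hx; simp [Term.subterms]
  | pair a b iha ihb =>
      intro x hx
      simp only [Term.tvars, Set.mem_union] at hx
      simp only [Term.subterms, Set.mem_insert_iff, Set.mem_union]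
      rcases hx with hx | hx
      · exact Or.inr (Or.inl (iha x hx))
      · exact Or.inr (Or.inr (ihb x hx))
  | enc a b iha ihb =>
      intro x hx
      simp only [Term.tvars, Set.mem_union] at hx
      simp only [Term.subterms, Set.mem_insert_iff, Set.mem_union]
      rcases hx with hx | hx
      · exact Or.inr (Or.inl (iha x hx))
      · exact Or.inr (Or.inr (ihb x hx))

namespace RunSetting

variable (R : RunSetting)

lemma Tmono' : ∀ {l l' : ℕ}, l ≤ l' → R.T l ⊆ R.T l' := by
  intro l l' h
  exact monotone_nat_of_le_succ (fun i => R.hTmono i) h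

lemma Dmem {s : Term} (hC : s ∈ R.C) (hnv : ∀ x, s ≠ Term.var x) : s ∈ R.D := by
  refine ⟨hC, ?_⟩
  rintro ⟨x, rfl⟩
  exact hnv x rfl

lemma Cmem_T {k : ℕ} (hk : k ≤ R.n) {u s : Term} (hu : u ∈ R.T k)
    (hs : s ∈ u.subterms) : s ∈ R.C := by
  refine Set.mem_biUnion (Set.mem_Iic.mpr hk) ?_
  exact Or.inl (Set.mem_biUnion (Set.mem_union_left _ hu) hs)

lemma Cmem_E {k : ℕ} (hk : k ≤ R.n) {e : Term × Term} (he : e ∈ R.E k) {s : Term}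
    (hs : s ∈ e.1.subterms ∪ e.2.subterms) : s ∈ R.C := by
  refine Set.mem_biUnion (Set.mem_Iic.mpr hk) ?_
  exact Or.inr (Set.mem_biUnion (Set.mem_union_left _ he) hs)

/-- provenance of the intruder equalities -/
lemma Eprov : ∀ k, k ≤ R.n → ∀ e ∈ R.E k, ∃ p, 1 ≤ p ∧ p ≤ k ∧
    e = ((R.α p).l, (R.α p).r) := by
  intro k
  induction k with
  | zero => intro _ e he; rw [R.hE0] at he; exact absurd he (Set.notMem_empty e)
  | succ m ih =>
      intro hk e he
      rw [R.hEstep (m+1) (by omega) hk] at he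
      simp only [Nat.add_sub_cancel] at he
      rcases he with he | he
      · obtain ⟨p, h1, h2, h3⟩ := ih (by omega) e he
        exact ⟨p, h1, by omega, h3⟩
      · exact ⟨m + 1, by omega, le_refl _, he⟩

/-- variable provenance in T -/
lemma varT : ∀ k, k ≤ R.n → ∀ u ∈ R.T k, ∀ x, x ∈ u.tvars → x ∉ R.Vq →
    ∃ j, 1 ≤ j ∧ j ≤ k ∧ x ∈ (R.α j).fv := by
  intro k
  induction k with
  | zero =>
      intro _ u hu x hx _
      have := R.hT0 u hu
      rw [Term.ground] at this
      rw [this] at hx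
      exact absurd hx (Set.notMem_empty x)
  | succ m ih =>
      intro hk u hu x hx hxV
      rw [R.hTstep (m+1) (by omega) hk] at hu
      simp only [Nat.add_sub_cancel] at hu
      rcases hu with (hu | hu) | hu
      · obtain ⟨j, h1, h2, h3⟩ := ih (by omega) u hu x hx hxV
        exact ⟨j, h1, by omega, h3⟩
      · -- u ∈ pubs Vq (α (m+1))
        obtain ⟨hmem, _, _⟩ := hu
        refine ⟨m + 1, by omega, le_refl _, ?_, ?_⟩
        · rcases hmem with hmem | hmem
          · exact Or.inl (Term.tvars_mono _ _ hmem hx)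
          · exact Or.inr (Term.tvars_mono _ _ hmem hx)
        · intro hbv
          exact hxV (R.hαbv (m+1) (by omega) hk hbv)
      · obtain ⟨z, hz, rfl⟩ := hu
        simp only [Term.tvars, Set.mem_singleton_iff] at hx
        subst hx
        exact absurd (R.hαbv (m+1) (by omega) hk hz) hxV

/-- variable provenance in E -/
lemma varE {k : ℕ} (hk : k ≤ R.n) {e : Term × Term} (he : e ∈ R.E k) :
    ∀ x, x ∈ e.1.tvars ∪ e.2.tvars → x ∉ R.Vq →
    ∃ j, 1 ≤ j ∧ j ≤ k ∧ x ∈ (R.α j).fv := by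
  intro x hx hxV
  obtain ⟨p, h1, h2, rfl⟩ := R.Eprov k hk e he
  refine ⟨p, h1, h2, hx, ?_⟩
  intro hbv
  exact hxV (R.hαbv p h1 (h2.trans hk) hbv)

/-- ω unifies every equality in E -/
lemma omegaE : ∀ k, k ≤ R.n → ∀ e ∈ R.E k, R.ω.app e.1 = R.ω.app e.2 := by
  intro k
  induction k using Nat.strong_induction_on with
  | _ k ihk =>
    match k with
    | 0 =>
        intro _ e he
        rw [R.hE0] at he
        exact absurd he (Set.notMem_empty e)
    | m + 1 =>
        intro hk e he
        -- sub-claim for received assertions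
        have hβω : ∀ q, 1 ≤ q → q ≤ m + 1 → R.ω.app (R.β q).l = R.ω.app (R.β q).r := by
          intro q hq1 hq2
          have hqn : q ≤ R.n := hq2.trans hk
          have hEω : ∀ e' ∈ pairImg R.σ (R.E (q-1)), R.ω.app e'.1 = R.ω.app e'.2 := by
            rintro e' ⟨e0, he0, rfl⟩
            have h0 := ihk (q-1) (by omega) (by omega) e0 he0
            simp only [app_comp_eq R.ω R.σ R.hωσ]
            exact h0
          have hs := eqdrv_sound R.ω hEω (R.hμeq q hq1 hqn)
          rw [app_comp_eq R.ω R.σ R.hωσ, app_comp_eq R.ω R.σ R.hωσ,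
            app_comp_eq R.ω (R.μ q) (R.hωμ q hq1 hqn),
            app_comp_eq R.ω (R.μ q) (R.hωμ q hq1 hqn)] at hs
          exact hs
        -- consistency of the α (m+1) equality
        have hαω : R.ω.app (R.α (m+1)).l = R.ω.app (R.α (m+1)).r := by
          have hFω : ∀ e' ∈ pairImg R.σ (R.F (m+1)), R.ω.app e'.1 = R.ω.app e'.2 := by
            rintro e' ⟨e0, he0, rfl⟩
            obtain ⟨q, hq1, hq2, rfl⟩ := R.hFmem (m+1) (by omega) hk e0 he0
            simp only [app_comp_eq R.ω R.σ R.hωσ]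
            exact hβω q hq1 hq2
          have hs := eqdrv_sound R.ω hFω (R.hθeq (m+1) (by omega) hk)
          rw [app_comp_eq R.ω R.σ R.hωσ, app_comp_eq R.ω R.σ R.hωσ,
            app_comp_eq R.ω (R.θ (m+1)) (R.hωθ (m+1) (by omega) hk),
            app_comp_eq R.ω (R.θ (m+1)) (R.hωθ (m+1) (by omega) hk)] at hs
          exact hs
        rw [R.hEstep (m+1) (by omega) hk] at he
        simp only [Nat.add_sub_cancel] at he
        rcases he with he | he
        · exact ihk m (by omega) (by omega) e he
        · rw [he]
          exact hαω

/-- a side of an assertion is a pub if it is Vq-free (uses ω-consistency). -/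
lemma side_mem_pubs (p : ℕ) (hp1 : 1 ≤ p) (hpn : p ≤ R.n) (s o : Term)
    (hs : s ∈ (R.α p).subterms)
    (hcover : ∀ w ∈ (R.α p).subterms, w ∈ s.subterms ∨ w ∈ o.subterms)
    (hωso : R.ω.app s = R.ω.app o)
    (hVq : s.tvars ∩ R.Vq = ∅) : s ∈ pubs R.Vq (R.α p) := by
  refine ⟨hs, hVq, ?_⟩
  rintro ⟨w, hw, hne, hsw, hwVq⟩
  rcases hcover w hw with hws | hwo
  · have h1 := Term.tsize_lt_of_mem w s hsw hne
    have h2 := Term.tsize_le_of_mem s w hws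
    omega
  · have h1 := R.ω.tsize_app_lt w s hsw hne
    have h2 := Term.tsize_le_of_mem _ _ (R.ω.app_mem_subterms o w hwo)
    rw [hωso] at h1
    omega

/-- Lemma G: Vq-free terms in the Q-closure are derivable from some earlier T. -/
lemma lemG : ∀ k, k ≤ R.n → ∀ a, Qset R.inv (Subst.app R.σ '' R.T k) (pairImg R.σ (R.E k)) a →
    a.tvars ∩ R.Vq = ∅ → ∃ l, l ≤ k ∧ dy R.inv (Subst.app R.σ '' R.T l) a := by
  intro k hk a hQ
  induction hQ with
  | @dy a h => exact fun _ => ⟨k, le_refl k, h⟩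
  | @sideL a b hab =>
      intro hVq
      obtain ⟨e0, he0, heq⟩ := hab
      obtain ⟨p, hp1, hp2, rfl⟩ := R.Eprov k hk e0 he0
      have ha : a = R.σ.app (R.α p).l := (congrArg Prod.fst heq).symm
      subst ha
      have hpn : p ≤ R.n := hp2.trans hk
      have hlv : (R.α p).l.tvars ∩ R.Vq = ∅ := by
        by_contra h
        obtain ⟨x, hx1, hx2⟩ := Set.nonempty_iff_ne_empty.mpr h
        have hvx : Term.var x ∈ (R.σ.app (R.α p).l).subterms := by
          have := R.σ.app_mem_subterms _ _ (Term.var_mem_subterms _ x hx1)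
          rwa [show R.σ.app (Term.var x) = Term.var x from R.hσVq x hx2] at this
        have : x ∈ (R.σ.app (R.α p).l).tvars :=
          Term.tvars_mono _ _ hvx (by simp [Term.tvars])
        exact Set.eq_empty_iff_forall_notMem.mp hVq x ⟨this, hx2⟩
      have hpub : (R.α p).l ∈ pubs R.Vq (R.α p) := by
        refine R.side_mem_pubs p hp1 hpn _ (R.α p).r
          (Or.inl (Term.self_mem_subterms _)) (fun w hw => hw) ?_ hlv
        exact R.omegaE k hk _ he0
      have hTl : (R.α p).l ∈ R.T p := by
        rw [R.hTstep p hp1 hpn]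
        exact Or.inl (Or.inr hpub)
      exact ⟨p, hp2, dy.ax ⟨_, hTl, rfl⟩⟩
  | @sideR a b hab =>
      intro hVq
      obtain ⟨e0, he0, heq⟩ := hab
      obtain ⟨p, hp1, hp2, rfl⟩ := R.Eprov k hk e0 he0
      have hb : b = R.σ.app (R.α p).r := (congrArg Prod.snd heq).symm
      subst hb
      have hpn : p ≤ R.n := hp2.trans hk
      have hlv : (R.α p).r.tvars ∩ R.Vq = ∅ := by
        by_contra h
        obtain ⟨x, hx1, hx2⟩ := Set.nonempty_iff_ne_empty.mpr h
        have hvx : Term.var x ∈ (R.σ.app (R.α p).r).subterms := by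
          have := R.σ.app_mem_subterms _ _ (Term.var_mem_subterms _ x hx1)
          rwa [show R.σ.app (Term.var x) = Term.var x from R.hσVq x hx2] at this
        have : x ∈ (R.σ.app (R.α p).r).tvars :=
          Term.tvars_mono _ _ hvx (by simp [Term.tvars])
        exact Set.eq_empty_iff_forall_notMem.mp hVq x ⟨this, hx2⟩
      have hpub : (R.α p).r ∈ pubs R.Vq (R.α p) := by
        refine R.side_mem_pubs p hp1 hpn _ (R.α p).l
          (Or.inr (Term.self_mem_subterms _)) (fun w hw => hw.elim Or.inr Or.inl) ?_ hlv
        exact (R.omegaE k hk _ he0).symm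
      have hTr : (R.α p).r ∈ R.T p := by
        rw [R.hTstep p hp1 hpn]
        exact Or.inl (Or.inr hpub)
      exact ⟨p, hp2, dy.ax ⟨_, hTr, rfl⟩⟩
  | @pair a1 a2 h1 h2 ih1 ih2 =>
      intro hVq
      have hVq1 : a1.tvars ∩ R.Vq = ∅ := by
        rw [Set.eq_empty_iff_forall_notMem] at hVq ⊢
        intro x hx
        exact hVq x ⟨by simp [Term.tvars]; exact Or.inl hx.1, hx.2⟩
      have hVq2 : a2.tvars ∩ R.Vq = ∅ := by
        rw [Set.eq_empty_iff_forall_notMem] at hVq ⊢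
        intro x hx
        exact hVq x ⟨by simp [Term.tvars]; exact Or.inr hx.1, hx.2⟩
      obtain ⟨l1, hl1, hd1⟩ := ih1 hVq1
      obtain ⟨l2, hl2, hd2⟩ := ih2 hVq2
      refine ⟨max l1 l2, max_le hl1 hl2, dy.pair ?_ ?_⟩
      · exact dy_mono (Set.image_mono (R.Tmono' (le_max_left l1 l2))) hd1
      · exact dy_mono (Set.image_mono (R.Tmono' (le_max_right l1 l2))) hd2
  | @enc a1 a2 h1 h2 ih1 ih2 =>
      intro hVq
      have hVq1 : a1.tvars ∩ R.Vq = ∅ := by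
        rw [Set.eq_empty_iff_forall_notMem] at hVq ⊢
        intro x hx
        exact hVq x ⟨by simp [Term.tvars]; exact Or.inl hx.1, hx.2⟩
      have hVq2 : a2.tvars ∩ R.Vq = ∅ := by
        rw [Set.eq_empty_iff_forall_notMem] at hVq ⊢
        intro x hx
        exact hVq x ⟨by simp [Term.tvars]; exact Or.inr hx.1, hx.2⟩
      obtain ⟨l1, hl1, hd1⟩ := ih1 hVq1
      obtain ⟨l2, hl2, hd2⟩ := ih2 hVq2
      refine ⟨max l1 l2, max_le hl1 hl2, dy.enc ?_ ?_⟩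
      · exact dy_mono (Set.image_mono (R.Tmono' (le_max_left l1 l2))) hd1
      · exact dy_mono (Set.image_mono (R.Tmono' (le_max_right l1 l2))) hd2

/-- Decomposition of a non-typed subterm of a substitution instance:
it must sit under a run variable, and hence inside a Q-closure element at an
earlier stage. -/
lemma decomp (k : ℕ) (hk : k ≤ R.n) (u t : Term)
    (hC : ∀ s ∈ u.subterms, s ∈ R.C)
    (hvar : ∀ x, x ∈ u.tvars → x ∉ R.Vq → ∃ j, 1 ≤ j ∧ j ≤ k ∧ x ∈ (R.α j).fv)
    (htu : t ∈ (R.σ.app u).subterms)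
    (hD : t ∉ Subst.app R.σ '' R.D)
    (hV : t ∉ varTerms R.Vq) :
    ∃ j, 1 ≤ j ∧ j ≤ k ∧ ∃ a, Qset R.inv (Subst.app R.σ '' R.T (j-1))
      (pairImg R.σ (R.E (j-1))) a ∧ t ∈ a.subterms ∧ t.tvars ∩ R.Vq = ∅ := by
  rcases subterm_app_decomp R.σ u t htu with ⟨s, hs, hnv, rfl⟩ | ⟨x, hx, hts⟩
  · exact absurd ⟨s, R.Dmem (hC s hs) hnv, rfl⟩ hD
  · by_cases hxV : x ∈ R.Vq
    · rw [R.hσVq x hxV] at hts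
      simp only [Term.subterms, Set.mem_singleton_iff] at hts
      subst hts
      exact absurd ⟨x, hxV, rfl⟩ hV
    · obtain ⟨j, hj1, hj2, hfv⟩ := hvar x hx hxV
      obtain ⟨j', hj'1, hj'2, hβ⟩ := R.hfvEarlier j hj1 (hj2.trans hk) x hfv
      have hjn : j' ≤ R.n := (hj'2.trans hj2).trans hk
      -- x is not instantiated by μ j'
      have hxd : (R.μ j') x = Term.var x := by
        by_contra h
        exact hxV (R.hβbv j' hj'1 hjn (R.hμdom j' hj'1 hjn h))
      have hQ := eqdrv_Qset (R.hμeq j' hj'1 hjn)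
      -- the tvars of t avoid Vq
      have htVq : t.tvars ∩ R.Vq = ∅ := by
        by_cases hgx : x ∈ R.σ.dom
        · have hg := R.hσground x hgx
          rw [Term.ground] at hg
          have hsub := Term.tvars_mono _ _ hts
          rw [hg] at hsub
          rw [Set.subset_empty_iff] at hsub
          rw [hsub, Set.empty_inter]
        · have hσx : R.σ x = Term.var x := not_not.mp hgx
          rw [hσx] at hts
          simp only [Term.subterms, Set.mem_singleton_iff] at hts
          subst hts
          simp only [Term.tvars]
          rw [Set.eq_empty_iff_forall_notMem]
          rintro y ⟨hy1, hy2⟩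
          rw [Set.mem_singleton_iff] at hy1
          subst hy1
          exact hxV hy2
      -- x occurs in a side of β j'
      obtain ⟨hside, hbv⟩ := hβ
      have key : ∀ w : Term, x ∈ w.tvars →
          t ∈ (R.σ.app ((R.μ j').app w)).subterms := by
        intro w hw
        have h1 : Term.var x ∈ ((R.μ j').app w).subterms := by
          have := (R.μ j').app_mem_subterms w _ (Term.var_mem_subterms w x hw)
          rwa [show (R.μ j').app (Term.var x) = (R.μ j') x from rfl, hxd] at this
        have h2 : R.σ x ∈ (R.σ.app ((R.μ j').app w)).subterms := by
          have := R.σ.app_mem_subterms _ _ h1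
          rwa [show R.σ.app (Term.var x) = R.σ x from rfl] at this
        exact Term.subterms_trans _ _ _ h2 hts
      rcases hside with hside | hside
      · exact ⟨j', hj'1, hj'2.trans hj2, _, hQ.1, key _ hside, htVq⟩
      · exact ⟨j', hj'1, hj'2.trans hj2, _, hQ.2, key _ hside, htVq⟩

/-- The main induction. -/
lemma mainind : ∀ k, k ≤ R.n → ∀ a, Qset R.inv (Subst.app R.σ '' R.T k)
    (pairImg R.σ (R.E k)) a → ∀ t ∈ a.subterms, t ∉ Subst.app R.σ '' R.D →
    t.tvars ∩ R.Vq = ∅ → ∃ l, l ≤ k ∧ dy R.inv (Subst.app R.σ '' R.T l) t := by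
  intro k
  induction k using Nat.strong_induction_on with
  | _ k ihk =>
    intro hk a hQ
    induction hQ with
    | @dy a ha =>
        intro t ht hD hVq
        rcases dy_subterm ha t ht with h | ⟨u', hu', htu'⟩
        · exact ⟨k, le_refl k, h⟩
        · obtain ⟨u, hu, rfl⟩ := hu'
          have hVt : t ∉ varTerms R.Vq := by
            rintro ⟨x, hxV, rfl⟩
            refine Set.eq_empty_iff_forall_notMem.mp hVq x ⟨?_, hxV⟩
            simp [Term.tvars]
          obtain ⟨j, hj1, hj2, a', hQ', hta', hVq'⟩ :=
            R.decomp k hk u t (fun s hs => R.Cmem_T hk hu hs)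
              (fun x hx hxV => R.varT k hk u hu x hx hxV) htu' hD hVt
          obtain ⟨l, hl, hdy⟩ := ihk (j-1) (by omega) (by omega) a' hQ' t hta' hD hVq'
          exact ⟨l, by omega, hdy⟩
    | @sideL a b hab =>
        intro t ht hD hVq
        obtain ⟨e0, he0, heq⟩ := hab
        have ha : a = R.σ.app e0.1 := (congrArg Prod.fst heq).symm
        subst ha
        have hVt : t ∉ varTerms R.Vq := by
          rintro ⟨x, hxV, rfl⟩
          refine Set.eq_empty_iff_forall_notMem.mp hVq x ⟨?_, hxV⟩
          simp [Term.tvars]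
        obtain ⟨j, hj1, hj2, a', hQ', hta', hVq'⟩ :=
          R.decomp k hk e0.1 t (fun s hs => R.Cmem_E hk he0 (Or.inl hs))
            (fun x hx hxV => R.varE hk he0 x (Or.inl hx) hxV) ht hD hVt
        obtain ⟨l, hl, hdy⟩ := ihk (j-1) (by omega) (by omega) a' hQ' t hta' hD hVq'
        exact ⟨l, by omega, hdy⟩
    | @sideR a b hab =>
        intro t ht hD hVq
        obtain ⟨e0, he0, heq⟩ := hab
        have hb : b = R.σ.app e0.2 := (congrArg Prod.snd heq).symm
        subst hb
        have hVt : t ∉ varTerms R.Vq := by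
          rintro ⟨x, hxV, rfl⟩
          refine Set.eq_empty_iff_forall_notMem.mp hVq x ⟨?_, hxV⟩
          simp [Term.tvars]
        obtain ⟨j, hj1, hj2, a', hQ', hta', hVq'⟩ :=
          R.decomp k hk e0.2 t (fun s hs => R.Cmem_E hk he0 (Or.inr hs))
            (fun x hx hxV => R.varE hk he0 x (Or.inr hx) hxV) ht hD hVt
        obtain ⟨l, hl, hdy⟩ := ihk (j-1) (by omega) (by omega) a' hQ' t hta' hD hVq'
        exact ⟨l, by omega, hdy⟩
    | @pair a1 a2 h1 h2 ih1 ih2 =>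
        intro t ht hD hVq
        simp only [Term.subterms, Set.mem_insert_iff, Set.mem_union] at ht
        rcases ht with rfl | ht | ht
        · exact R.lemG k hk _ (Qset.pair h1 h2) hVq
        · exact ih1 t ht hD hVq
        · exact ih2 t ht hD hVq
    | @enc a1 a2 h1 h2 ih1 ih2 =>
        intro t ht hD hVq
        simp only [Term.subterms, Set.mem_insert_iff, Set.mem_union] at ht
        rcases ht with rfl | ht | ht
        · exact R.lemG k hk _ (Qset.enc h1 h2) hVq
        · exact ih1 t ht hD hVq
        · exact ih2 t ht hD hVq

end RunSetting

/-- Lemma (earlier-proof). -/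
theorem stmt12 (R : RunSetting) (i : ℕ) (hi : i ≤ R.n) (t : Term)
    (ht : t ∉ Subst.app R.σ '' R.D ∪ varTerms R.Vq)
    (d : DPT) (hv : DPT.valid R.inv (Subst.app R.σ '' R.T i) d)
    (hc : DPT.concl R.inv d = some t) (hn : DPT.normal d)
    (hd : DPT.endsDestructor d) :
    ∃ l, l < i ∧ dy R.inv (Subst.app R.σ '' R.T l) t := by
  rw [Set.mem_union] at ht
  push_neg at ht
  obtain ⟨htD, htV⟩ := ht
  have hnc : ¬ DPT.endsConstructor d := by
    cases d <;> simp [DPT.endsConstructor, DPT.endsDestructor] at hd ⊢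
  obtain ⟨u', hu', htu'⟩ := dpt_concl_subterm d hv hn hnc t hc
  obtain ⟨u, hu, rfl⟩ := hu'
  obtain ⟨j, hj1, hj2, a', hQ', hta', hVq'⟩ :=
    R.decomp i hi u t (fun s hs => R.Cmem_T hi hu hs)
      (fun x hx hxV => R.varT i hi u hu x hx hxV) htu' htD htV
  obtain ⟨l, hl, hdy⟩ := R.mainind (j-1) (by omega) a' hQ' t hta' htD hVq'
  exact ⟨l, by omega, hdy⟩
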